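/- arXiv:2306.09654 — 3 statements merged into one kernel-verified Lean document; each statement's English description precedes it below -/
import Mathlib

section
/- Let M be an Orlicz function, let p ≥ 1 be a real number, and suppose that limsup_{t→0⁺} M(t)/t^p > 0. Then there exist a constant a > 0 and a sequence (t_k)_{k∈ℕ} of positive reals with t_k → 0 such that (i) M satisfies the Δ2-condition with respect to (t_k), and (ii) liminf_{k→∞} M(t_k)/t_k^p ≥ a · limsup_{t→0⁺} M(t)/t^p, where both the limsup and the liminf are taken in the extended nonnegative reals [0,∞] (in particular, if the limsup is ∞ then M(t_k)/t_k^p → ∞). -/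
open Filter Set

private lemma orlicz_mono (M : ℝ → ℝ) (hconv : ConvexOn ℝ Set.univ M)
    (heven : ∀ t : ℝ, M (-t) = M t) (hzero : M 0 = 0) :
    ∀ x y : ℝ, 0 ≤ x → x ≤ y → M x ≤ M y := by
  intro x y hx hxy
  rcases eq_or_lt_of_le (hx.trans hxy) with h | hy
  · have hx0 : x = 0 := le_antisymm (hxy.trans h.symm.le) hx
    rw [hx0, ← h, hzero]
  · set a := (y - x) / (2 * y) with ha_def
    set b := (y + x) / (2 * y) with hb_def
    have ha : 0 ≤ a := div_nonneg (by linarith) (by linarith)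
    have hb : 0 ≤ b := div_nonneg (by linarith) (by linarith)
    have hab : a + b = 1 := by
      rw [ha_def, hb_def, ← add_div, div_eq_one_iff_eq (by linarith)]; ring
    have hxeq : a * (-y) + b * y = x := by
      rw [ha_def, hb_def]; field_simp; ring
    have h2 := hconv.2 (Set.mem_univ (-y)) (Set.mem_univ y) ha hb hab
    rw [smul_eq_mul, smul_eq_mul, smul_eq_mul, smul_eq_mul, hxeq, heven] at h2
    calc M x ≤ a * M y + b * M y := h2
    _ = M y := by rw [← add_mul, hab, one_mul]

private lemma delta2_of_eventually (M : ℝ → ℝ) (t : ℕ → ℝ) (c C0 : ℝ)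
    (hMpos : ∀ k, 0 < M (t k))
    (h : ∀ᶠ k in Filter.atTop, M (c * t k) ≤ C0 * M (t k)) :
    ∃ C : ℝ, ∀ k, M (c * t k) ≤ C * M (t k) := by
  classical
  obtain ⟨N, hN⟩ := Filter.eventually_atTop.1 h
  set C1 := (Finset.range (N + 1)).sup' (by simp) (fun k => M (c * t k) / M (t k)) with hC1
  refine ⟨max C0 C1, fun k => ?_⟩
  rcases le_or_gt N k with hk | hk
  · exact (hN k hk).trans (mul_le_mul_of_nonneg_right (le_max_left _ _) (hMpos k).le)
  · have h1 : M (c * t k) / M (t k) ≤ C1 :=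
      Finset.le_sup' (fun k => M (c * t k) / M (t k)) (Finset.mem_range.2 (by omega))
    exact (div_le_iff₀ (hMpos k)).1 (h1.trans (le_max_right C0 C1))

/-- Let `M` be an Orlicz function (convex, even, `M 0 = 0`, `M t > 0` for
`t ≠ 0`) and `p ≥ 1` with `limsup_{t→0⁺} M t / t^p > 0` (computed in `[0,∞]`).
Then there are `a > 0` and a positive sequence `t_k → 0` such that `M` satisfies the
`Δ₂`-condition with respect to `(t_k)` and
`liminf_k M(t_k)/t_k^p ≥ a * limsup_{t→0⁺} M t / t^p` in `[0,∞]`. -/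
theorem orlicz_delta2_wrt_sequence_of_limsup_pos
    (M : ℝ → ℝ) (p : ℝ) (hp : 1 ≤ p)
    (hconv : ConvexOn ℝ Set.univ M)
    (heven : ∀ t : ℝ, M (-t) = M t)
    (hzero : M 0 = 0)
    (hpos : ∀ t : ℝ, t ≠ 0 → 0 < M t)
    (hlimsup : 0 < Filter.limsup (fun t : ℝ => ENNReal.ofReal (M t / t ^ p))
        (nhdsWithin 0 (Set.Ioi 0))) :
    ∃ (a : ℝ) (t : ℕ → ℝ), 0 < a ∧ (∀ k, 0 < t k) ∧
      Filter.Tendsto t Filter.atTop (nhds 0) ∧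
      (∀ c : ℝ, 1 < c → ∃ C : ℝ, ∀ k, M (c * t k) ≤ C * M (t k)) ∧
      ENNReal.ofReal a *
          Filter.limsup (fun s : ℝ => ENNReal.ofReal (M s / s ^ p))
            (nhdsWithin 0 (Set.Ioi 0)) ≤
        Filter.liminf (fun k : ℕ => ENNReal.ofReal (M (t k) / (t k) ^ p)) Filter.atTop := by
  have hmono := orlicz_mono M hconv heven hzero
  have hMnonneg : ∀ x : ℝ, 0 ≤ M x := by
    intro x
    rcases eq_or_ne x 0 with h | h
    · rw [h, hzero]
    · exact (hpos x h).le
  have hcont : Continuous M := by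
    rw [← continuousOn_univ]
    exact hconv.continuousOn isOpen_univ
  set φ : ℝ → ℝ := fun s => M s / s ^ p with hφ_def
  have hrpow_cont : Continuous fun s : ℝ => s ^ p := by
    exact Real.continuous_rpow_const (by linarith)
  have hφcont : ContinuousOn φ (Set.Ioi (0:ℝ)) := by
    apply (hcont.continuousOn).div (hrpow_cont.continuousOn)
    intro s hs
    exact ne_of_gt (Real.rpow_pos_of_pos hs p)
  have hφnonneg : ∀ s : ℝ, 0 < s → 0 ≤ φ s := fun s hs =>
    div_nonneg (hMnonneg s) (Real.rpow_pos_of_pos hs p).le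
  set L := Filter.limsup (fun s : ℝ => ENNReal.ofReal (φ s)) (nhdsWithin 0 (Set.Ioi 0)) with hL_def
  have hL_eq : Filter.limsup (fun s : ℝ => ENNReal.ofReal (M s / s ^ p))
      (nhdsWithin 0 (Set.Ioi 0)) = L := rfl
  have hLpos : 0 < L := hlimsup
  -- key equality M s = φ s * s ^ p for s > 0
  have hMeq : ∀ s : ℝ, 0 < s → M s = φ s * s ^ p := by
    intro s hs
    rw [hφ_def]
    exact (div_mul_cancel₀ _ (ne_of_gt (Real.rpow_pos_of_pos hs p))).symm
  by_cases hLtop : L = ⊤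
  · -- infinite limsup case
    have hexists : ∀ k : ℕ, ∃ u : ℝ, 0 < u ∧ u ≤ 1 / ((k:ℝ) + 1) ∧
        ((k:ℝ) + 1) ^ (p + 1) ≤ φ u ∧
        ∀ s ∈ Set.Icc u (1 / ((k:ℝ) + 1)), φ s ≤ φ u := by
      intro k
      have hk1 : (0:ℝ) < 1 / ((k:ℝ) + 1) := by positivity
      have hfreq : ∃ᶠ s in nhdsWithin (0:ℝ) (Set.Ioi 0),
          ENNReal.ofReal (((k:ℝ) + 1) ^ (p + 1)) < ENNReal.ofReal (φ s) := by
        apply Filter.frequently_lt_of_lt_limsup (by isBoundedDefault)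
        rw [← hL_def, hLtop]
        exact ENNReal.ofReal_lt_top
      have hev : ∀ᶠ s in nhdsWithin (0:ℝ) (Set.Ioi 0), s ∈ Set.Ioo 0 (1 / ((k:ℝ) + 1)) :=
        Ioo_mem_nhdsGT_of_mem ⟨le_refl _, hk1⟩
      obtain ⟨u0, hu0φ, hu0mem⟩ := (hfreq.and_eventually hev).exists
      have hu0φ' : ((k:ℝ) + 1) ^ (p + 1) < φ u0 := by
        rwa [ENNReal.ofReal_lt_ofReal_iff_of_nonneg
          (Real.rpow_nonneg (by positivity) _)] at hu0φ
      obtain ⟨u, huI, humax⟩ := isCompact_Icc.exists_isMaxOn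
        (Set.nonempty_Icc.2 hu0mem.2.le)
        (hφcont.mono (fun s hs => lt_of_lt_of_le hu0mem.1 hs.1))
      refine ⟨u, lt_of_lt_of_le hu0mem.1 huI.1, huI.2, ?_, ?_⟩
      · exact le_trans hu0φ'.le (humax ⟨le_refl u0, hu0mem.2.le⟩)
      · intro s hs
        exact humax ⟨le_trans huI.1 hs.1, hs.2⟩
    choose t htpos htle htlow htmax using hexists
    have httend : Filter.Tendsto t Filter.atTop (nhds 0) := by
      apply squeeze_zero (fun k => (htpos k).le) htle
      exact tendsto_one_div_add_atTop_nhds_zero_nat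
    refine ⟨1, t, one_pos, htpos, httend, ?_, ?_⟩
    · intro c hc
      have hc0 : (0:ℝ) < c := by linarith
      refine ⟨max (c ^ p) (c ^ p * M c), fun k => ?_⟩
      have htk := htpos k
      have hcp : (0:ℝ) < c ^ p := Real.rpow_pos_of_pos hc0 p
      rcases le_or_gt (c * t k) (1 / ((k:ℝ) + 1)) with hcase | hcase
      · -- c * t k in the maximization window
        have h1 : φ (c * t k) ≤ φ (t k) :=
          htmax k _ ⟨le_mul_of_one_le_left htk.le hc.le, hcase⟩
        have h2 : M (c * t k) = φ (c * t k) * (c ^ p * (t k) ^ p) := by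
          rw [hMeq _ (by positivity), Real.mul_rpow hc0.le htk.le]
        rw [h2, hMeq _ htk]
        calc φ (c * t k) * (c ^ p * (t k) ^ p)
            ≤ φ (t k) * (c ^ p * (t k) ^ p) := by
              apply mul_le_mul_of_nonneg_right h1; positivity
          _ = c ^ p * (φ (t k) * (t k) ^ p) := by ring
          _ ≤ max (c ^ p) (c ^ p * M c) * (φ (t k) * (t k) ^ p) := by
              apply mul_le_mul_of_nonneg_right (le_max_left _ _)
              have := hφnonneg (t k) htk
              positivity
      · -- c * t k beyond the window: use crude bounds
        have hn : (0:ℝ) < (k:ℝ) + 1 := by positivity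
        have htk_gt : 1 / (c * ((k:ℝ) + 1)) < t k := by
          rw [div_lt_iff₀ (by positivity)]
          calc (1:ℝ) = (1 / ((k:ℝ) + 1)) * ((k:ℝ) + 1) := by field_simp
          _ < (c * t k) * ((k:ℝ) + 1) := by
              apply mul_lt_mul_of_pos_right hcase hn
          _ = t k * (c * ((k:ℝ) + 1)) := by ring
        have hub : M (c * t k) ≤ M c := by
          apply hmono _ _ (by positivity)
          calc c * t k ≤ c * 1 := by
                apply mul_le_mul_of_nonneg_left _ hc0.le
                calc t k ≤ 1 / ((k:ℝ) + 1) := htle k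
                _ ≤ 1 := by rw [div_le_one hn]; linarith [Nat.cast_nonneg (α := ℝ) k]
          _ = c := mul_one c
        have hlb : 1 / c ^ p ≤ M (t k) := by
          have h1 : (1 / (c * ((k:ℝ) + 1))) ^ p ≤ (t k) ^ p :=
            Real.rpow_le_rpow (by positivity) htk_gt.le (by linarith)
          have h2 : ((k:ℝ) + 1) ^ (p + 1) * (1 / (c * ((k:ℝ) + 1))) ^ p
              = ((k:ℝ) + 1) / c ^ p := by
            rw [Real.div_rpow (by norm_num) (by positivity), Real.one_rpow,
              Real.mul_rpow hc0.le hn.le, Real.rpow_add_one (ne_of_gt hn)]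
            field_simp
          have h3 : ((k:ℝ) + 1) / c ^ p ≤ M (t k) := by
            rw [hMeq _ htk, ← h2]
            apply mul_le_mul (htlow k) h1 (by positivity) (hφnonneg (t k) htk)
          calc 1 / c ^ p ≤ ((k:ℝ) + 1) / c ^ p := by
                gcongr
                linarith [Nat.cast_nonneg (α := ℝ) k]
          _ ≤ M (t k) := h3
        calc M (c * t k) ≤ M c := hub
        _ = (c ^ p * M c) * (1 / c ^ p) := by field_simp
        _ ≤ (c ^ p * M c) * M (t k) := by
            apply mul_le_mul_of_nonneg_left hlb (mul_nonneg hcp.le (hMnonneg c))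
        _ ≤ max (c ^ p) (c ^ p * M c) * M (t k) := by
            apply mul_le_mul_of_nonneg_right (le_max_right _ _) (hMnonneg _)
    · -- liminf bound, a = 1
      rw [hLtop]
      have htop : Filter.Tendsto (fun k : ℕ => ENNReal.ofReal (M (t k) / (t k) ^ p))
          Filter.atTop (nhds ⊤) := by
        rw [ENNReal.tendsto_nhds_top_iff_nat]
        intro n
        filter_upwards [Filter.eventually_ge_atTop n] with k hk
        have h1 : ((k:ℝ) + 1) ≤ φ (t k) := by
          have := htlow k
          calc ((k:ℝ) + 1) = ((k:ℝ) + 1) ^ (1:ℝ) := (Real.rpow_one _).symm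
          _ ≤ ((k:ℝ) + 1) ^ (p + 1) :=
            Real.rpow_le_rpow_of_exponent_le (by linarith [Nat.cast_nonneg (α := ℝ) k]) (by linarith)
          _ ≤ φ (t k) := this
        have h2 : (n:ℝ) < φ (t k) := by
          have : (n:ℝ) ≤ (k:ℝ) := Nat.cast_le.2 hk
          linarith
        calc (n : ENNReal) = ENNReal.ofReal (n:ℝ) := by simp
        _ < ENNReal.ofReal (φ (t k)) := by
            rw [ENNReal.ofReal_lt_ofReal_iff (lt_of_le_of_lt (Nat.cast_nonneg n) h2)]
            exact h2
      rw [htop.liminf_eq]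
      simp
  · -- finite limsup case
    set ℓ := L.toReal with hℓ_def
    have hℓpos : 0 < ℓ := ENNReal.toReal_pos (ne_of_gt hLpos) hLtop
    have hLeq : ENNReal.ofReal ℓ = L := ENNReal.ofReal_toReal hLtop
    have hupper : ∀ᶠ s in nhdsWithin (0:ℝ) (Set.Ioi 0),
        ENNReal.ofReal (φ s) < ENNReal.ofReal (ℓ + 1) := by
      refine Filter.eventually_lt_of_limsup_lt ?_ (by isBoundedDefault)
      rw [← hL_def, ← hLeq, ENNReal.ofReal_lt_ofReal_iff (by linarith)]
      linarith
    obtain ⟨b, hb0, hbub⟩ := (nhdsGT_basis (0:ℝ)).eventually_iff.1 hupper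
    have hbub' : ∀ s ∈ Set.Ioo (0:ℝ) b, φ s ≤ ℓ + 1 := by
      intro s hs
      by_contra hcon
      exact absurd (ENNReal.ofReal_le_ofReal (not_le.1 hcon).le) (not_le.2 (hbub hs))
    have hexists : ∀ k : ℕ, ∃ u : ℝ, 0 < u ∧ u < min b (1 / ((k:ℝ) + 1)) ∧ ℓ / 2 < φ u := by
      intro k
      have hmin : (0:ℝ) < min b (1 / ((k:ℝ) + 1)) := lt_min hb0 (by positivity)
      have hfreq : ∃ᶠ s in nhdsWithin (0:ℝ) (Set.Ioi 0),
          ENNReal.ofReal (ℓ / 2) < ENNReal.ofReal (φ s) := by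
        apply Filter.frequently_lt_of_lt_limsup (by isBoundedDefault)
        rw [← hL_def, ← hLeq, ENNReal.ofReal_lt_ofReal_iff hℓpos]
        linarith
      have hev : ∀ᶠ s in nhdsWithin (0:ℝ) (Set.Ioi 0),
          s ∈ Set.Ioo 0 (min b (1 / ((k:ℝ) + 1))) :=
        Ioo_mem_nhdsGT_of_mem ⟨le_refl _, hmin⟩
      obtain ⟨u, huφ, humem⟩ := (hfreq.and_eventually hev).exists
      refine ⟨u, humem.1, humem.2, ?_⟩
      rwa [ENNReal.ofReal_lt_ofReal_iff_of_nonneg (by positivity)] at huφ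
    choose t htpos htlt htlow using hexists
    have htle : ∀ k, t k ≤ 1 / ((k:ℝ) + 1) :=
      fun k => le_of_lt (lt_of_lt_of_le (htlt k) (min_le_right _ _))
    have htltb : ∀ k, t k < b := fun k => lt_of_lt_of_le (htlt k) (min_le_left _ _)
    have httend : Filter.Tendsto t Filter.atTop (nhds 0) := by
      apply squeeze_zero (fun k => (htpos k).le) htle
      exact tendsto_one_div_add_atTop_nhds_zero_nat
    have hMtpos : ∀ k, 0 < M (t k) := fun k => hpos _ (ne_of_gt (htpos k))
    refine ⟨1/2, t, by norm_num, htpos, httend, ?_, ?_⟩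
    · intro c hc
      have hc0 : (0:ℝ) < c := by linarith
      have hcp : (0:ℝ) < c ^ p := Real.rpow_pos_of_pos hc0 p
      apply delta2_of_eventually M t c ((ℓ + 1) * c ^ p * (2 / ℓ)) hMtpos
      have hevsmall : ∀ᶠ k : ℕ in Filter.atTop, c * t k < b := by
        have : Filter.Tendsto (fun k : ℕ => c * t k) Filter.atTop (nhds 0) := by
          simpa using httend.const_mul c
        exact (this.eventually (eventually_lt_nhds hb0))
      filter_upwards [hevsmall] with k hk
      have htk := htpos k
      have hφb : φ (c * t k) ≤ ℓ + 1 := hbub' _ ⟨by positivity, hk⟩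
      have h1 : M (c * t k) ≤ (ℓ + 1) * (c ^ p * (t k) ^ p) := by
        rw [hMeq _ (by positivity : (0:ℝ) < c * t k), Real.mul_rpow hc0.le htk.le]
        apply mul_le_mul_of_nonneg_right hφb (by positivity)
      have h2 : (t k) ^ p ≤ (2 / ℓ) * M (t k) := by
        rw [hMeq _ htk]
        rw [div_mul_eq_mul_div, le_div_iff₀ hℓpos]
        calc (t k) ^ p * ℓ = (ℓ / 2) * (t k) ^ p * 2 := by ring
        _ ≤ φ (t k) * (t k) ^ p * 2 := by
            apply mul_le_mul_of_nonneg_right _ (by norm_num)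
            apply mul_le_mul_of_nonneg_right (htlow k).le (by positivity)
        _ = 2 * (φ (t k) * (t k) ^ p) := by ring
      calc M (c * t k) ≤ (ℓ + 1) * (c ^ p * (t k) ^ p) := h1
      _ ≤ (ℓ + 1) * (c ^ p * ((2 / ℓ) * M (t k))) := by
          apply mul_le_mul_of_nonneg_left _ (by linarith)
          exact mul_le_mul_of_nonneg_left h2 hcp.le
      _ = (ℓ + 1) * c ^ p * (2 / ℓ) * M (t k) := by ring
    · rw [← hLeq, ← ENNReal.ofReal_mul (by norm_num)]
      have : (1/2 : ℝ) * ℓ = ℓ / 2 := by ring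
      rw [this]
      refine Filter.le_liminf_of_le (by isBoundedDefault) ?_
      apply Filter.Eventually.of_forall
      intro k
      exact ENNReal.ofReal_le_ofReal (htlow k).le
end

section
/- Let M be an Orlicz function and let p ≥ 1 be a real number with limsup_{t→0⁺} M(t)/t^p > 0. Then there exists a sequence (t_k)_{k∈ℕ} of positive reals with t_k → 0 such that M satisfies the Δ2-condition with respect to (t_k). -/
/-- Let `M` be an Orlicz function and `p ≥ 1` a real number with
`limsup_{t→0⁺} M t / t^p > 0` (computed in `[0,∞]`).  Then there is a sequence of positive
reals `t_k → 0` such that `M` satisfies the `Δ₂`-condition with respect to `(t_k)`: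
for every `c > 1` there is `C` with `M (c * t_k) ≤ C * M (t_k)` for all `k`. -/
theorem orlicz_exists_delta2_sequence
    (M : ℝ → ℝ) (p : ℝ) (hp : 1 ≤ p)
    (hconv : ConvexOn ℝ Set.univ M)
    (heven : ∀ t : ℝ, M (-t) = M t)
    (hzero : M 0 = 0)
    (hpos : ∀ t : ℝ, t ≠ 0 → 0 < M t)
    (hlimsup : 0 < Filter.limsup (fun t : ℝ => ENNReal.ofReal (M t / t ^ p))
        (nhdsWithin 0 (Set.Ioi 0))) :
    ∃ t : ℕ → ℝ, (∀ k, 0 < t k) ∧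
      Filter.Tendsto t Filter.atTop (nhds 0) ∧
      (∀ c : ℝ, 1 < c → ∃ C : ℝ, ∀ k, M (c * t k) ≤ C * M (t k)) := by
  classical
  open Filter Set in
  -- nonnegativity of M
  have hM0 : ∀ t : ℝ, 0 ≤ M t := by
    intro t
    have h := hconv.2 (mem_univ (-t)) (mem_univ t) (by norm_num : (0:ℝ) ≤ 1/2)
      (by norm_num : (0:ℝ) ≤ 1/2) (by norm_num)
    simp only [smul_eq_mul] at h
    have : (1/2 : ℝ) * (-t) + (1/2) * t = 0 := by ring
    rw [this, hzero, heven t] at h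
    linarith
  -- monotonicity of M on [0, ∞)
  have hmono : ∀ a b : ℝ, 0 ≤ a → a ≤ b → M a ≤ M b := by
    intro a b ha hab
    rcases eq_or_lt_of_le (ha.trans hab) with hb | hb
    · have : a = 0 := le_antisymm (hab.trans hb.symm.le) ha
      rw [this, ← hb]
    · have hab1 : a/b ≤ 1 := (div_le_one hb).mpr hab
      have h := hconv.2 (mem_univ (0:ℝ)) (mem_univ b)
        (by linarith : (0:ℝ) ≤ 1 - a/b)
        (by positivity : (0:ℝ) ≤ a/b)
        (by ring)
      simp only [smul_eq_mul, mul_zero, zero_add, hzero, mul_zero] at h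
      rw [div_mul_cancel₀ a hb.ne'] at h
      have : a/b * M b ≤ M b := by
        nlinarith [hM0 b]
      linarith
  set f : ℝ → ℝ := fun t => M t / t ^ p with hfdef
  have hfnn : ∀ t : ℝ, 0 < t → 0 ≤ f t := by
    intro t ht
    exact div_nonneg (hM0 t) (Real.rpow_nonneg ht.le p)
  have hfM : ∀ t : ℝ, 0 < t → f t * t ^ p = M t := by
    intro t ht
    exact div_mul_cancel₀ _ (ne_of_gt (Real.rpow_pos_of_pos ht p))
  -- the key reduction
  suffices h : ∃ δ K : ℝ, ∃ t : ℕ → ℝ, 0 < δ ∧ δ ≤ 1 ∧ 0 ≤ K ∧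
      (∀ k, 0 < t k) ∧ (∀ k, t k ≤ δ) ∧ (∀ k, t k ≤ 1/((k:ℝ)+1)) ∧
      (∀ k, ∀ s : ℝ, t k ≤ s → s ≤ δ → f s ≤ K * f (t k)) by
    obtain ⟨δ, K, t, hδ, hδ1, hK, htpos, htδ, ht1, hkey⟩ := h
    refine ⟨t, htpos, ?_, ?_⟩
    · exact squeeze_zero (fun k => (htpos k).le) ht1
        tendsto_one_div_add_atTop_nhds_zero_nat
    · intro c hc
      have hc0 : (0:ℝ) < c := lt_trans one_pos hc
      have hδc : 0 < δ / c := by positivity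
      refine ⟨max (K * c ^ p) (M c / M (δ/c)), fun k => ?_⟩
      by_cases hck : c * t k ≤ δ
      · -- main case
        have htk := htpos k
        have hctk : 0 < c * t k := by positivity
        have h1 : t k ≤ c * t k := le_mul_of_one_le_left htk.le hc.le
        have h2 : f (c * t k) ≤ K * f (t k) := hkey k _ h1 hck
        have h3 : M (c * t k) = f (c * t k) * (c ^ p * (t k) ^ p) := by
          rw [← Real.mul_rpow hc0.le htk.le, hfM _ hctk]
        rw [h3]
        have h4 : f (c * t k) * (c ^ p * (t k) ^ p) ≤
            (K * f (t k)) * (c ^ p * (t k) ^ p) := by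
          apply mul_le_mul_of_nonneg_right h2
          positivity
        have h5 : (K * f (t k)) * (c ^ p * (t k) ^ p)
            = (K * c ^ p) * (f (t k) * (t k) ^ p) := by ring
        rw [h5, hfM _ htk] at h4
        refine h4.trans (mul_le_mul_of_nonneg_right (le_max_left _ _) (hM0 _))
      · -- exceptional case : c * t k > δ
        push_neg at hck
        have htk := htpos k
        have h1 : δ / c < t k := (div_lt_iff₀ hc0).mpr (by linarith [mul_comm c (t k)])
        have h2 : M (δ/c) ≤ M (t k) := hmono _ _ hδc.le h1.le
        have h3 : M (c * t k) ≤ M c := by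
          apply hmono _ _ (by positivity)
          calc c * t k ≤ c * 1 := by nlinarith [htδ k]
            _ = c := mul_one c
        have h4 : 0 < M (δ/c) := hpos _ (ne_of_gt hδc)
        have h5 : 0 ≤ M c / M (δ/c) := div_nonneg (hM0 c) h4.le
        calc M (c * t k) ≤ M c := h3
          _ = (M c / M (δ/c)) * M (δ/c) := by field_simp
          _ ≤ (M c / M (δ/c)) * M (t k) := mul_le_mul_of_nonneg_left h2 h5
          _ ≤ max (K * c ^ p) (M c / M (δ/c)) * M (t k) :=
              mul_le_mul_of_nonneg_right (le_max_right _ _) (hM0 _)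
  -- construct δ, K, t by cases on whether the limsup is ⊤
  set u : ℝ → ENNReal := fun t => ENNReal.ofReal (M t / t ^ p) with hudef
  set L := Filter.limsup u (nhdsWithin 0 (Set.Ioi 0)) with hLdef
  by_cases hLtop : L = ⊤
  · -- limsup infinite : use near-maximizers
    have hMcont : Continuous M :=
      continuousOn_univ.mp (hconv.continuousOn isOpen_univ)
    have hfcont : ∀ x : ℝ, 0 < x → ContinuousOn f (Icc x 1) := by
      intro x hx
      apply ContinuousOn.div hMcont.continuousOn
      · apply ContinuousOn.rpow_const continuousOn_id
        intro s hs; left; exact ne_of_gt (lt_of_lt_of_le hx hs.1)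
      · intro s hs
        exact ne_of_gt (Real.rpow_pos_of_pos (lt_of_lt_of_le hx hs.1) p)
    have hex : ∀ k : ℕ, ∃ w : ℝ, 0 < w ∧ w ≤ min 1 (1/((k:ℝ)+1)) ∧
        (∀ s : ℝ, w ≤ s → s ≤ 1 → f s ≤ 1 * f w) := by
      intro k
      have hk1 : (0:ℝ) < 1/((k:ℝ)+1) := by positivity
      have hk2 : (1:ℝ)/((k:ℝ)+1) ≤ 1 := by
        rw [div_le_one (by positivity)]; linarith [show (0:ℝ) ≤ (k:ℝ) from Nat.cast_nonneg k]
      -- max of f on [1/(k+1), 1]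
      obtain ⟨m, hm, hmmax⟩ := isCompact_Icc.exists_isMaxOn
        (nonempty_Icc.mpr hk2) (hfcont _ hk1)
      -- a point x < 1/(k+1) with f x > f m
      have hfreq : ∃ᶠ s in nhdsWithin 0 (Set.Ioi 0), ENNReal.ofReal (f m) < u s := by
        apply Filter.frequently_lt_of_lt_limsup Filter.isCobounded_le_of_bot
        rw [← hLdef, hLtop]; exact ENNReal.ofReal_lt_top
      obtain ⟨x, hxmem, hxf⟩ := Filter.frequently_iff.mp hfreq
        (Ioo_mem_nhdsGT_of_mem ⟨le_refl _, hk1⟩)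
      have hx0 : 0 < x := hxmem.1
      have hxlt : x < 1/((k:ℝ)+1) := hxmem.2
      have hfx : f m < f x := by
        have := (ENNReal.ofReal_lt_ofReal_iff_of_nonneg (hfnn m (lt_of_lt_of_le hk1 hm.1))).mp hxf
        exact this
      have hx1 : x ≤ 1 := le_of_lt (lt_of_lt_of_le hxlt hk2)
      -- max of f on [x, 1]
      obtain ⟨w, hw, hwmax⟩ := isCompact_Icc.exists_isMaxOn
        (nonempty_Icc.mpr hx1) (hfcont _ hx0)
      have hw0 : 0 < w := lt_of_lt_of_le hx0 hw.1
      have hfw : f x ≤ f w := hwmax ⟨le_refl x, hx1⟩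
      have hwlt : w < 1/((k:ℝ)+1) := by
        by_contra hcon
        push_neg at hcon
        have : f w ≤ f m := hmmax ⟨hcon, hw.2⟩
        linarith
      refine ⟨w, hw0, le_min hw.2 hwlt.le, fun s hs1 hs2 => ?_⟩
      rw [one_mul]
      exact hwmax ⟨le_trans hw.1 hs1, hs2⟩
    choose t htpos ht2 hkey using hex
    exact ⟨1, 1, t, one_pos, le_refl 1, zero_le_one, htpos,
      fun k => le_trans (ht2 k) (min_le_left _ _),
      fun k => le_trans (ht2 k) (min_le_right _ _), hkey⟩
  · -- limsup finite
    have hL0 : L ≠ 0 := ne_of_gt hlimsup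
    set a : ℝ := (L/2).toReal with hadef
    have hL2top : L/2 ≠ ⊤ := by
      simp [ENNReal.div_eq_top, hLtop]
    have ha : 0 < a := ENNReal.toReal_pos (by simp [ENNReal.div_eq_zero_iff, hL0]) hL2top
    set B : ℝ := (L+1).toReal with hBdef
    have hB : 0 ≤ B := ENNReal.toReal_nonneg
    have hLB : L + 1 ≠ ⊤ := by simp [hLtop]
    -- eventual upper bound
    have hev : ∀ᶠ s in nhdsWithin 0 (Set.Ioi 0), u s < L + 1 := by
      apply Filter.eventually_lt_of_limsup_lt
      · rw [← hLdef]; exact ENNReal.lt_add_right hLtop one_ne_zero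
      · exact Filter.isBounded_le_of_top
    obtain ⟨δ0, hδ0, hδ0sub⟩ :
        ∃ δ0 > (0:ℝ), ∀ s, s ∈ Set.Ioo (0:ℝ) δ0 → u s < L + 1 := by
      rcases mem_nhdsGT_iff_exists_Ioo_subset.mp hev with ⟨δ0, hδ0, hsub⟩
      exact ⟨δ0, hδ0, fun s hs => hsub hs⟩
    set δ : ℝ := min (δ0/2) 1 with hδdef
    have hδpos : 0 < δ := lt_min (by linarith) one_pos
    have hδ1 : δ ≤ 1 := min_le_right _ _
    have hδlt : δ < δ0 := lt_of_le_of_lt (min_le_left _ _) (by linarith)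
    -- frequent lower bound
    have hfreq : ∃ᶠ s in nhdsWithin 0 (Set.Ioi 0), L/2 < u s :=
      Filter.frequently_lt_of_lt_limsup Filter.isCobounded_le_of_bot
        (by rw [← hLdef]; exact ENNReal.half_lt_self hL0 hLtop)
    have hex : ∀ k : ℕ, ∃ w : ℝ, 0 < w ∧ w ≤ min δ (1/((k:ℝ)+1)) ∧ a < f w := by
      intro k
      have hmin : (0:ℝ) < min δ (1/((k:ℝ)+1)) := lt_min hδpos (by positivity)
      obtain ⟨w, hwmem, hwf⟩ := Filter.frequently_iff.mp hfreq
        (Ioo_mem_nhdsGT_of_mem ⟨le_refl _, hmin⟩)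
      refine ⟨w, hwmem.1, hwmem.2.le, ?_⟩
      rw [hadef]
      exact (ENNReal.lt_ofReal_iff_toReal_lt hL2top).mp hwf
    choose t htpos ht2 htf using hex
    refine ⟨δ, B/a, t, hδpos, hδ1, div_nonneg hB ha.le, htpos,
      fun k => le_trans (ht2 k) (min_le_left _ _),
      fun k => le_trans (ht2 k) (min_le_right _ _), ?_⟩
    intro k s hs1 hs2
    have hs0 : 0 < s := lt_of_lt_of_le (htpos k) hs1
    have hsB : f s ≤ B := by
      have h1 : u s < L + 1 := hδ0sub s ⟨hs0, lt_of_le_of_lt hs2 hδlt⟩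
      have h2 : (u s).toReal ≤ B := ENNReal.toReal_mono hLB h1.le
      rwa [hudef, ENNReal.toReal_ofReal (hfnn s hs0)] at h2
    calc f s ≤ B := hsB
      _ = (B/a) * a := by field_simp
      _ ≤ (B/a) * f (t k) := mul_le_mul_of_nonneg_left (htf k).le
          (div_nonneg hB ha.le)
end

section
/- Let M be an Orlicz function and let p ≥ 1 be a real number. Suppose that limsup_{t→0⁺} M(t)/t^p < ∞ and that sup{ M(u·v) / (u^p · M(v)) : u, v ∈ (0,1] } = ∞. Then for every a ∈ (0,1], sup{ M(u·v) / (u^p · M(v)) : u ∈ (0,1], v ∈ (0,a] } = ∞. -/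
/-- Let `M` be an Orlicz function and `p ≥ 1`.  Suppose
`limsup_{t→0⁺} M t / t^p < ∞` (in `[0,∞]`) and
`sup { M (u*v) / (u^p * M v) : u, v ∈ (0,1] } = ∞`.  Then for every `a ∈ (0,1]`,
`sup { M (u*v) / (u^p * M v) : u ∈ (0,1], v ∈ (0,a] } = ∞`. -/
theorem orlicz_unbounded_quotient_localizes
    (M : ℝ → ℝ) (p : ℝ) (hp : 1 ≤ p)
    (hconv : ConvexOn ℝ Set.univ M)
    (heven : ∀ t : ℝ, M (-t) = M t)
    (hzero : M 0 = 0)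
    (hpos : ∀ t : ℝ, t ≠ 0 → 0 < M t)
    (hlimsup : Filter.limsup (fun t : ℝ => ENNReal.ofReal (M t / t ^ p))
        (nhdsWithin 0 (Set.Ioi 0)) < ⊤)
    (hsup : ¬ BddAbove {r : ℝ | ∃ u ∈ Set.Ioc (0:ℝ) 1, ∃ v ∈ Set.Ioc (0:ℝ) 1,
        r = M (u * v) / (u ^ p * M v)}) :
    ∀ a ∈ Set.Ioc (0:ℝ) 1,
      ¬ BddAbove {r : ℝ | ∃ u ∈ Set.Ioc (0:ℝ) 1, ∃ v ∈ Set.Ioc (0:ℝ) a,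
        r = M (u * v) / (u ^ p * M v)} := by
  intro a ha hBdd
  apply hsup
  -- M is nondecreasing on [0,∞)
  have hmono : ∀ x y : ℝ, 0 ≤ x → x ≤ y → M x ≤ M y := by
    intro x y hx hxy
    rcases eq_or_lt_of_le (hx.trans hxy) with h0 | hy
    · have hx0 : x = 0 := le_antisymm (hxy.trans h0.symm.le) hx
      rw [hx0, ← h0]
    · have h1 : (0:ℝ) ≤ (y - x)/(2*y) := div_nonneg (by linarith) (by linarith)
      have h2 : (0:ℝ) ≤ (y + x)/(2*y) := div_nonneg (by linarith) (by linarith)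
      have h3 : (y - x)/(2*y) + (y + x)/(2*y) = 1 := by
        rw [← add_div]; field_simp; ring
      have key := hconv.2 (Set.mem_univ (-y)) (Set.mem_univ y) h1 h2 h3
      simp only [smul_eq_mul] at key
      have hcomb : (y - x)/(2*y) * (-y) + (y + x)/(2*y) * y = x := by
        field_simp; ring
      rw [hcomb, heven] at key
      calc M x ≤ ((y - x)/(2*y)) * M y + ((y + x)/(2*y)) * M y := key
        _ = M y := by rw [← add_mul, h3, one_mul]
  -- extract a bound near 0
  set L := Filter.limsup (fun t : ℝ => ENNReal.ofReal (M t / t ^ p))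
      (nhdsWithin 0 (Set.Ioi 0)) with hL
  have hK : L < L + 1 := ENNReal.lt_add_right hlimsup.ne one_ne_zero
  have hev := Filter.eventually_lt_of_limsup_lt hK
  rw [eventually_nhdsWithin_iff, Metric.eventually_nhds_iff] at hev
  obtain ⟨δ, hδ, hδev⟩ := hev
  have hKtop : L + 1 ≠ ⊤ := by
    exact ENNReal.add_ne_top.mpr ⟨hlimsup.ne, ENNReal.one_ne_top⟩
  set C := (L + 1).toReal with hC
  have hC0 : 0 ≤ C := ENNReal.toReal_nonneg
  have hCle : ∀ t : ℝ, 0 < t → t < δ → M t / t ^ p ≤ C := by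
    intro t ht htδ
    have := hδev (y := t) (by simp [Real.dist_eq, abs_of_pos ht, htδ]) ht
    have h2 : ENNReal.ofReal (M t / t ^ p) < ENNReal.ofReal C := by
      rwa [hC, ENNReal.ofReal_toReal hKtop]
    by_contra hc
    push_neg at hc
    exact absurd (ENNReal.ofReal_le_ofReal hc.le) (not_le.mpr h2)
  obtain ⟨B, hB⟩ := hBdd
  have hMa : 0 < M a := hpos a ha.1.ne'
  have hp0 : (0:ℝ) ≤ p := le_trans zero_le_one hp
  refine ⟨max B (max (C / M a) (M 1 / (δ ^ p * M a))), ?_⟩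
  rintro r ⟨u, hu, v, hv, rfl⟩
  rcases le_or_gt v a with hva | hva
  · exact le_max_of_le_left (hB ⟨u, hu, v, ⟨hv.1, hva⟩, rfl⟩)
  · have hav : a ≤ v := hva.le
    have hMav : M a ≤ M v := hmono a v ha.1.le hav
    have hMv : 0 < M v := lt_of_lt_of_le hMa hMav
    have hup : 0 < u ^ p := Real.rpow_pos_of_pos hu.1 p
    rcases lt_or_ge u δ with huδ | huδ
    · -- small u: use the limsup bound
      have huv0 : 0 < u * v := mul_pos hu.1 hv.1
      have huvδ : u * v < δ := lt_of_le_of_lt (by nlinarith [hv.2, hu.1.le]) huδ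
      have hMuv : M (u * v) ≤ C * (u * v) ^ p := by
        have := hCle (u * v) huv0 huvδ
        have hpow : 0 < (u * v) ^ p := Real.rpow_pos_of_pos huv0 p
        exact (div_le_iff₀ hpow).mp this
      have hvp1 : v ^ p ≤ 1 := Real.rpow_le_one hv.1.le hv.2 hp0
      have hmul : (u * v) ^ p = u ^ p * v ^ p := Real.mul_rpow hu.1.le hv.1.le
      refine le_max_of_le_right (le_max_of_le_left ?_)
      rw [div_le_div_iff₀ (by positivity) hMa]
      have h1 : M (u * v) ≤ C * u ^ p := by
        calc M (u * v) ≤ C * (u ^ p * v ^ p) := by rwa [hmul] at hMuv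
          _ ≤ C * (u ^ p * 1) := by
              apply mul_le_mul_of_nonneg_left _ hC0
              exact mul_le_mul_of_nonneg_left hvp1 hup.le
          _ = C * u ^ p := by ring
      nlinarith [hMa.le, hMav, hup.le, mul_le_mul h1 hMav hMa.le (by positivity : (0:ℝ) ≤ C * u ^ p)]
    · -- large u: crude bound
      have hδp : 0 < δ ^ p := Real.rpow_pos_of_pos hδ p
      have huδp : δ ^ p ≤ u ^ p := Real.rpow_le_rpow hδ.le huδ hp0
      have huv1 : u * v ≤ 1 := by nlinarith [hu.1.le, hu.2, hv.2, hv.1.le]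
      have hMuv1 : M (u * v) ≤ M 1 := hmono _ _ (mul_nonneg hu.1.le hv.1.le) huv1
      refine le_max_of_le_right (le_max_of_le_right ?_)
      apply div_le_div₀ (by nlinarith [hpos 1 one_ne_zero]) hMuv1 (by positivity)
      exact mul_le_mul huδp hMav hMa.le hup.le
end
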